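/- arXiv:1704.08972 — 3 statements merged into one kernel-verified Lean document; each statement's English description precedes it below -/
import Mathlib

section
/- Let M ≥ 1, let κ ∈ ℝ^M, and let Δ be an M×M real symmetric matrix with zero diagonal. Define the multivariate Von Mises log-density exponent (with μ = 0) as f(θ) = Σ_i κ_i cos(θ_i) − Σ_{i,k} Δ_{ik} (sin θ_i sin θ_k + cos θ_i cos θ_k) for θ ∈ ℝ^M. Define the real symmetric matrix G by G_{ik} = Δ_{ik} for k ≠ i and G_{ii} = κ_i/2 − Σ_{l≠i} Δ_{il}. Then for every θ ∈ ℝ^M, with φ_i = exp(j θ_i), one has (φ − 1_M)^H G (φ − 1_M) + f(θ) = trace(G) + Σ_{i,k} G_{ik}; in particular the quadratic form equals −f(θ) plus a constant independent of θ. -/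
open Matrix Complex Finset

/-- Quantitative content of Lemma 1 with eq. (7): for the multivariate Von Mises
log-density exponent `f` (mean `μ = 0`) and the matrix `G = Γ_φ⁻¹` built from
`κ` and `Δ`, one has `(φ − 1)ᴴ G (φ − 1) + f(θ) = trace G + Σ_{i,k} G_{ik}`,
a constant independent of `θ`. -/
theorem vonMises_mahalanobis_identity (M : ℕ) (hM : 1 ≤ M)
    (κ : Fin M → ℝ) (Δ : Matrix (Fin M) (Fin M) ℝ)
    (hΔ : Δ.IsSymm) (hΔd : ∀ i, Δ i i = 0)
    (f : (Fin M → ℝ) → ℝ)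
    (hf : ∀ θ : Fin M → ℝ, f θ = ∑ i, κ i * Real.cos (θ i)
      - ∑ i, ∑ k, Δ i k *
          (Real.sin (θ i) * Real.sin (θ k) + Real.cos (θ i) * Real.cos (θ k)))
    (G : Matrix (Fin M) (Fin M) ℝ)
    (hG : ∀ i k, G i k =
      if k = i then κ i / 2 - ∑ l ∈ Finset.univ.erase i, Δ i l else Δ i k)
    (θ : Fin M → ℝ) (φ : Fin M → ℂ)
    (hφ : ∀ i, φ i = Complex.exp (Complex.I * (θ i : ℂ))) :
    star (φ - 1) ⬝ᵥ ((G.map Complex.ofReal) *ᵥ (φ - 1)) + (f θ : ℂ) =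
      ((G.trace + ∑ i, ∑ k, G i k : ℝ) : ℂ) := by
  -- symmetry of G
  have hGsymm : ∀ i k, G i k = G k i := by
    intro i k
    rcases eq_or_ne k i with h | h
    · subst h; rfl
    · rw [hG i k, hG k i, if_neg h, if_neg (Ne.symm h)]
      exact Matrix.IsSymm.apply hΔ k i
  -- row sums of G
  have hrow : ∀ i, ∑ k, G i k = κ i / 2 := by
    intro i
    rw [← Finset.add_sum_erase _ _ (Finset.mem_univ i), hG i i, if_pos rfl]
    have h2 : ∑ k ∈ Finset.univ.erase i, G i k = ∑ k ∈ Finset.univ.erase i, Δ i k :=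
      Finset.sum_congr rfl fun k hk => by rw [hG, if_neg (Finset.ne_of_mem_erase hk)]
    rw [h2]; ring
  -- abbreviations
  set c : Fin M → Fin M → ℂ := fun i k => ((starRingEnd ℂ) (φ i) - 1) * (φ k - 1) with hcdef
  have hc : ∀ i k, c i k + c k i =
      ((2 * (Real.cos (θ i) * Real.cos (θ k) + Real.sin (θ i) * Real.sin (θ k)
        - Real.cos (θ i) - Real.cos (θ k) + 1) : ℝ) : ℂ) := by
    intro i k
    simp only [hcdef, hφ]
    rw [mul_comm Complex.I ((θ i : ℂ)), mul_comm Complex.I ((θ k : ℂ))]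
    rw [Complex.exp_mul_I, Complex.exp_mul_I]
    rw [← Complex.ofReal_cos, ← Complex.ofReal_cos, ← Complex.ofReal_sin,
      ← Complex.ofReal_sin]
    simp only [map_add, _root_.map_mul, Complex.conj_ofReal, Complex.conj_I]
    push_cast
    linear_combination (-2 * Complex.sin ((θ i : ℂ)) * Complex.sin ((θ k : ℂ))) * Complex.I_sq
  -- the quadratic form as a real number
  have hS : star (φ - 1) ⬝ᵥ ((G.map Complex.ofReal) *ᵥ (φ - 1))
      = ((∑ i, ∑ k, G i k * (Real.cos (θ i) * Real.cos (θ k)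
          + Real.sin (θ i) * Real.sin (θ k)
          - Real.cos (θ i) - Real.cos (θ k) + 1) : ℝ) : ℂ) := by
    have h1 : star (φ - 1) ⬝ᵥ ((G.map Complex.ofReal) *ᵥ (φ - 1))
        = ∑ i, ∑ k, (G i k : ℂ) * c i k := by
      simp only [dotProduct, Matrix.mulVec, dotProduct, Pi.star_apply,
        Pi.sub_apply, Pi.one_apply, Matrix.map_apply, Finset.mul_sum, hcdef]
      refine Finset.sum_congr rfl fun i _ => Finset.sum_congr rfl fun k _ => by
        simp [Complex.star_def]; ring
    have h2 : (2 : ℂ) * (∑ i, ∑ k, (G i k : ℂ) * c i k)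
        = (2 : ℂ) * ((∑ i, ∑ k, G i k * (Real.cos (θ i) * Real.cos (θ k)
          + Real.sin (θ i) * Real.sin (θ k)
          - Real.cos (θ i) - Real.cos (θ k) + 1) : ℝ) : ℂ) := by
      have hswap : (∑ i, ∑ k, (G i k : ℂ) * c i k)
          = ∑ i, ∑ k, (G i k : ℂ) * c k i := by
        rw [Finset.sum_comm]
        exact Finset.sum_congr rfl fun i _ => Finset.sum_congr rfl fun k _ => by
          rw [hGsymm i k]
      calc (2 : ℂ) * (∑ i, ∑ k, (G i k : ℂ) * c i k)
          = (∑ i, ∑ k, (G i k : ℂ) * c i k) + ∑ i, ∑ k, (G i k : ℂ) * c k i := by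
            rw [← hswap]; ring
        _ = ∑ i, ∑ k, (G i k : ℂ) * (c i k + c k i) := by
            rw [← Finset.sum_add_distrib]
            refine Finset.sum_congr rfl fun i _ => ?_
            rw [← Finset.sum_add_distrib]
            exact Finset.sum_congr rfl fun k _ => by ring
        _ = _ := by
            push_cast
            rw [Finset.mul_sum]
            refine Finset.sum_congr rfl fun i _ => ?_
            rw [Finset.mul_sum]
            refine Finset.sum_congr rfl fun k _ => ?_
            rw [hc i k]
            push_cast
            ring
    rw [h1]
    exact mul_left_cancel₀ two_ne_zero h2
  rw [hS, hf, ← Complex.ofReal_add, Complex.ofReal_inj]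
  -- now a purely real identity
  have e1 : ∑ i, ∑ k, G i k * (Real.cos (θ i) * Real.cos (θ k)
        + Real.sin (θ i) * Real.sin (θ k))
      = G.trace + ∑ i, ∑ k, Δ i k *
        (Real.sin (θ i) * Real.sin (θ k) + Real.cos (θ i) * Real.cos (θ k)) := by
    rw [Matrix.trace, ← Finset.sum_add_distrib]
    refine Finset.sum_congr rfl fun i _ => ?_
    rw [← Finset.add_sum_erase _ _ (Finset.mem_univ i),
      ← Finset.add_sum_erase _ (fun k => Δ i k * _) (Finset.mem_univ i)]
    have hp : Real.cos (θ i) * Real.cos (θ i) + Real.sin (θ i) * Real.sin (θ i) = 1 := by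
      have := Real.sin_sq_add_cos_sq (θ i); nlinarith [this]
    rw [hp, hΔd i]
    have h3 : ∑ k ∈ Finset.univ.erase i, G i k * (Real.cos (θ i) * Real.cos (θ k)
          + Real.sin (θ i) * Real.sin (θ k))
        = ∑ k ∈ Finset.univ.erase i, Δ i k *
          (Real.sin (θ i) * Real.sin (θ k) + Real.cos (θ i) * Real.cos (θ k)) := by
      refine Finset.sum_congr rfl fun k hk => ?_
      rw [hG, if_neg (Finset.ne_of_mem_erase hk)]; ring
    rw [h3, Matrix.diag]; ring
  have e2 : ∑ i, ∑ k, G i k * Real.cos (θ i) = ∑ i, κ i / 2 * Real.cos (θ i) := by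
    refine Finset.sum_congr rfl fun i _ => ?_
    rw [← Finset.sum_mul, hrow]
  have e3 : ∑ i, ∑ k, G i k * Real.cos (θ k) = ∑ i, κ i / 2 * Real.cos (θ i) := by
    rw [Finset.sum_comm]
    refine Finset.sum_congr rfl fun k _ => ?_
    rw [← Finset.sum_mul]
    have : ∑ i, G i k = κ k / 2 := by
      rw [Finset.sum_congr rfl fun i (_ : i ∈ Finset.univ) => hGsymm i k]
      exact hrow k
    rw [this]
  have e4 : ∑ i, ∑ k, G i k * (Real.cos (θ i) * Real.cos (θ k)
        + Real.sin (θ i) * Real.sin (θ k) - Real.cos (θ i) - Real.cos (θ k) + 1)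
      = (∑ i, ∑ k, G i k * (Real.cos (θ i) * Real.cos (θ k)
          + Real.sin (θ i) * Real.sin (θ k)))
        - (∑ i, ∑ k, G i k * Real.cos (θ i))
        - (∑ i, ∑ k, G i k * Real.cos (θ k)) + ∑ i, ∑ k, G i k := by
    simp only [← Finset.sum_add_distrib, ← Finset.sum_sub_distrib]
    exact Finset.sum_congr rfl fun i _ => Finset.sum_congr rfl fun k _ => by ring
  have e5 : ∑ i, κ i * Real.cos (θ i)
      = (∑ i, κ i / 2 * Real.cos (θ i)) + ∑ i, κ i / 2 * Real.cos (θ i) := by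
    rw [← Finset.sum_add_distrib]
    exact Finset.sum_congr rfl fun i _ => by ring
  rw [e4, e1, e2, e3, e5]
  ring
end

section
/- Let M ≥ 1, let κ ∈ ℝ^M, let Δ be an M×M real symmetric matrix with zero diagonal, and define f(θ) = Σ_i κ_i cos(θ_i) − Σ_{i,k} Δ_{ik} (sin θ_i sin θ_k + cos θ_i cos θ_k) and the real symmetric matrix G by G_{ik} = Δ_{ik} for k ≠ i and G_{ii} = κ_i/2 − Σ_{l≠i} Δ_{il}. Then for θ̂ ∈ ℝ^M with φ̂_i = exp(j θ̂_i), the following are equivalent: (i) f(θ̂) ≥ f(θ) for all θ ∈ ℝ^M; (ii) (φ̂ − 1_M)^H G (φ̂ − 1_M) ≤ (φ − 1_M)^H G (φ − 1_M) for every φ ∈ ℂ^M with |φ_i| = 1 for all i. -/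
open Matrix Complex Finset

lemma vonMises_reQ (M : ℕ) (G : Matrix (Fin M) (Fin M) ℝ) (θ : Fin M → ℝ)
    (φ : Fin M → ℂ) (hφ : ∀ i, φ i = Complex.exp (Complex.I * (θ i : ℂ))) :
    (star (φ - 1) ⬝ᵥ ((G.map Complex.ofReal) *ᵥ (φ - 1))).re
      = ∑ i, ∑ k, G i k *
          (Real.cos (θ k - θ i) - Real.cos (θ i) - Real.cos (θ k) + 1) := by
  have hre : ∀ i, (φ i - 1).re = Real.cos (θ i) - 1 := by
    intro i
    rw [hφ i, mul_comm, Complex.exp_mul_I]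
    simp [← Complex.ofReal_cos]
  have him : ∀ i, (φ i - 1).im = Real.sin (θ i) := by
    intro i
    rw [hφ i, mul_comm, Complex.exp_mul_I]
    simp [← Complex.ofReal_sin]
  simp only [dotProduct, mulVec, Pi.sub_apply, Pi.star_apply, Pi.one_apply,
    Complex.re_sum, dotProduct]
  refine Finset.sum_congr rfl fun i _ => ?_
  rw [Finset.mul_sum, Complex.re_sum]
  refine Finset.sum_congr rfl fun k _ => ?_
  rw [show (star (φ i - 1) * (G.map Complex.ofReal i k * (φ k - 1))).re
      = (star (φ i - 1)).re * (G.map Complex.ofReal i k * (φ k - 1)).re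
        - (star (φ i - 1)).im * (G.map Complex.ofReal i k * (φ k - 1)).im
      from Complex.mul_re _ _]
  simp only [Matrix.map_apply, Complex.mul_re, Complex.mul_im,
    Complex.conj_re, Complex.conj_im, Complex.ofReal_re, Complex.ofReal_im,
    RCLike.star_def, hre, him, Real.cos_sub]
  ring

lemma vonMises_algebraQ (M : ℕ) (κ : Fin M → ℝ) (Δ : Matrix (Fin M) (Fin M) ℝ)
    (hΔ : Δ.IsSymm) (hΔd : ∀ i, Δ i i = 0)
    (G : Matrix (Fin M) (Fin M) ℝ)
    (hG : ∀ i k, G i k =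
      if k = i then κ i / 2 - ∑ l ∈ Finset.univ.erase i, Δ i l else Δ i k)
    (θ : Fin M → ℝ) :
    ∑ i, ∑ k, G i k * (Real.cos (θ k - θ i) - Real.cos (θ i) - Real.cos (θ k) + 1)
      = (∑ i, (κ i - ∑ l, Δ i l))
        - (∑ i, κ i * Real.cos (θ i) - ∑ i, ∑ k, Δ i k *
            (Real.sin (θ i) * Real.sin (θ k) + Real.cos (θ i) * Real.cos (θ k))) := by
  set E : Fin M → Fin M → ℝ := fun i k =>
    Real.cos (θ k - θ i) - Real.cos (θ i) - Real.cos (θ k) + 1 with hE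
  set S : Fin M → ℝ := fun i => ∑ l, Δ i l with hSdef
  have hSerase : ∀ i, ∑ l ∈ Finset.univ.erase i, Δ i l = S i := fun i =>
    Finset.sum_erase _ (hΔd i)
  have hEii : ∀ i, E i i = 2 - 2 * Real.cos (θ i) := by
    intro i; simp only [hE, sub_self, Real.cos_zero]; ring
  have h1 : ∀ i, ∑ k, G i k * E i k
      = (κ i / 2 - S i) * (2 - 2 * Real.cos (θ i)) + ∑ k, Δ i k * E i k := by
    intro i
    rw [← Finset.sum_erase_add Finset.univ _ (Finset.mem_univ i)]
    have e1 : ∑ k ∈ Finset.univ.erase i, G i k * E i k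
        = ∑ k ∈ Finset.univ.erase i, Δ i k * E i k := by
      refine Finset.sum_congr rfl fun k hk => ?_
      rw [hG, if_neg (Finset.ne_of_mem_erase hk)]
    have e2 : ∑ k ∈ Finset.univ.erase i, Δ i k * E i k = ∑ k, Δ i k * E i k :=
      Finset.sum_erase _ (by rw [hΔd i, zero_mul])
    rw [e1, e2, hG, if_pos rfl, hSerase, hEii]
    ring
  have hQ : ∑ i, ∑ k, G i k * E i k
      = ∑ i, (κ i / 2 - S i) * (2 - 2 * Real.cos (θ i))
        + ∑ i, ∑ k, Δ i k * E i k := by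
    rw [← Finset.sum_add_distrib]
    exact Finset.sum_congr rfl fun i _ => h1 i
  have hswap : ∑ i, ∑ k, Δ i k * Real.cos (θ k) = ∑ i, S i * Real.cos (θ i) := by
    rw [Finset.sum_comm]
    refine Finset.sum_congr rfl fun k _ => ?_
    rw [Finset.sum_mul]
    exact Finset.sum_congr rfl fun i _ => by rw [hΔ.apply]
  have hinner : ∀ i, ∑ k, Δ i k * E i k
      = (∑ k, Δ i k * (Real.sin (θ i) * Real.sin (θ k)
          + Real.cos (θ i) * Real.cos (θ k)))
        + S i - S i * Real.cos (θ i) - ∑ k, Δ i k * Real.cos (θ k) := by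
    intro i
    have : ∀ k, Δ i k * E i k
        = Δ i k * (Real.sin (θ i) * Real.sin (θ k)
            + Real.cos (θ i) * Real.cos (θ k))
          + Δ i k - Δ i k * Real.cos (θ i) - Δ i k * Real.cos (θ k) := by
      intro k; simp only [hE, Real.cos_sub]; ring
    rw [Finset.sum_congr rfl fun k _ => this k]
    rw [Finset.sum_sub_distrib, Finset.sum_sub_distrib, Finset.sum_add_distrib,
      ← Finset.sum_mul]
  have hdouble : ∑ i, ∑ k, Δ i k * E i k
      = (∑ i, ∑ k, Δ i k * (Real.sin (θ i) * Real.sin (θ k)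
          + Real.cos (θ i) * Real.cos (θ k)))
        + ∑ i, S i - 2 * ∑ i, S i * Real.cos (θ i) := by
    rw [Finset.sum_congr rfl fun i _ => hinner i]
    rw [Finset.sum_sub_distrib, Finset.sum_sub_distrib, Finset.sum_add_distrib,
      hswap]
    ring
  rw [hQ, hdouble]
  have hfin : ∑ i, (κ i / 2 - S i) * (2 - 2 * Real.cos (θ i))
      + (∑ i, S i - 2 * ∑ i, S i * Real.cos (θ i))
      = (∑ i, (κ i - S i)) - ∑ i, κ i * Real.cos (θ i) := by
    rw [Finset.mul_sum, ← Finset.sum_sub_distrib, ← Finset.sum_add_distrib,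
      ← Finset.sum_sub_distrib]
    exact Finset.sum_congr rfl fun i _ => by ring
  linarith [hfin]

/-- Lemma 1 of the paper: `θ̂` maximizes the multivariate Von Mises log-density
exponent `f` if and only if `φ̂ = exp(j θ̂)` minimizes the Mahalanobis-type
quadratic form `(φ − 1)ᴴ G (φ − 1)` over unit-modulus vectors `φ`, where
`G = Γ_φ⁻¹` is built from `κ` and `Δ` via eq. (7). -/
theorem vonMises_MAP_iff_mahalanobis_min (M : ℕ) (hM : 1 ≤ M)
    (κ : Fin M → ℝ) (Δ : Matrix (Fin M) (Fin M) ℝ)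
    (hΔ : Δ.IsSymm) (hΔd : ∀ i, Δ i i = 0)
    (f : (Fin M → ℝ) → ℝ)
    (hf : ∀ θ : Fin M → ℝ, f θ = ∑ i, κ i * Real.cos (θ i)
      - ∑ i, ∑ k, Δ i k *
          (Real.sin (θ i) * Real.sin (θ k) + Real.cos (θ i) * Real.cos (θ k)))
    (G : Matrix (Fin M) (Fin M) ℝ)
    (hG : ∀ i k, G i k =
      if k = i then κ i / 2 - ∑ l ∈ Finset.univ.erase i, Δ i l else Δ i k)
    (θhat : Fin M → ℝ) (φhat : Fin M → ℂ)
    (hφhat : ∀ i, φhat i = Complex.exp (Complex.I * (θhat i : ℂ))) :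
    (∀ θ : Fin M → ℝ, f θ ≤ f θhat) ↔
      (∀ φ : Fin M → ℂ, (∀ i, ‖φ i‖ = 1) →
        (star (φhat - 1) ⬝ᵥ ((G.map Complex.ofReal) *ᵥ (φhat - 1))).re ≤
          (star (φ - 1) ⬝ᵥ ((G.map Complex.ofReal) *ᵥ (φ - 1))).re) := by
  have key : ∀ (θ : Fin M → ℝ) (φ : Fin M → ℂ),
      (∀ i, φ i = Complex.exp (Complex.I * (θ i : ℂ))) →
      (star (φ - 1) ⬝ᵥ ((G.map Complex.ofReal) *ᵥ (φ - 1))).re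
        = (∑ i, (κ i - ∑ l, Δ i l)) - f θ := by
    intro θ φ hφ
    rw [vonMises_reQ M G θ φ hφ, vonMises_algebraQ M κ Δ hΔ hΔd G hG θ, hf]
  constructor
  · intro hmax φ hunit
    have hφ : ∀ i, φ i = Complex.exp (Complex.I * (((φ i).arg : ℝ) : ℂ)) := by
      intro i
      have h1 := Complex.norm_mul_exp_arg_mul_I (φ i)
      have h2 : ‖φ i‖ = 1 := by
        exact hunit i
      rw [h2, Complex.ofReal_one, one_mul] at h1
      rw [mul_comm]
      exact h1.symm
    rw [key θhat φhat hφhat, key (fun i => (φ i).arg) φ hφ]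
    have := hmax (fun i => (φ i).arg)
    linarith
  · intro hmin θ
    have hunit : ∀ i, ‖Complex.exp (Complex.I * (θ i : ℂ))‖ = 1 := by
      intro i
      rw [mul_comm, Complex.norm_exp_ofReal_mul_I]
    have h := hmin (fun i => Complex.exp (Complex.I * (θ i : ℂ))) hunit
    rw [key θhat φhat hφhat, key θ _ (fun i => rfl)] at h
    linarith
end

section
/- Let M₀ be an M×M Hermitian complex matrix, let G be an M×M real symmetric matrix, let σ² > 0, and let Q be the (M+1)×(M+1) Hermitian matrix with top-left block M₀ + σ² G, top-right column −σ² G 1_M, bottom-left row −σ² 1_M^T G, and bottom-right scalar σ² Σ_{i,k} G_{ik}. Suppose û ∈ ℂ^{M+1} satisfies |û_i| = 1 for all i and û^H Q û ≤ u^H Q u for every u ∈ ℂ^{M+1} with |u_i| = 1 for all i. Then φ̂ = (û_{M+1})^{-1} · (û_1, …, û_M) satisfies |φ̂_i| = 1 for all i and minimizes the objective J(φ) = (1/σ²) φ^H M₀ φ + (φ − 1_M)^H G (φ − 1_M) over all φ ∈ ℂ^M with |φ_i| = 1 for all i. -/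
open Matrix Complex Finset

/-- Value of the homogenized quadratic form at the lift `(φ, 1)` of `φ`. -/
lemma aux_quad_snoc (M : ℕ) (M₀ : Matrix (Fin M) (Fin M) ℂ)
    (G : Matrix (Fin M) (Fin M) ℝ) (σ2 : ℝ)
    (Q : Matrix (Fin (M + 1)) (Fin (M + 1)) ℂ)
    (hQ : ∀ i k : Fin (M + 1), Q i k =
      if hi : (i : ℕ) < M then
        if hk : (k : ℕ) < M then
          M₀ ⟨i, hi⟩ ⟨k, hk⟩ + (σ2 : ℂ) * (G ⟨i, hi⟩ ⟨k, hk⟩ : ℂ)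
        else -(σ2 : ℂ) * ∑ l, (G ⟨i, hi⟩ l : ℂ)
      else
        if hk : (k : ℕ) < M then -(σ2 : ℂ) * ∑ l, (G l ⟨k, hk⟩ : ℂ)
        else (σ2 : ℂ) * ∑ p, ∑ q, (G p q : ℂ))
    (φ : Fin M → ℂ) :
    star (Fin.snoc φ (1:ℂ)) ⬝ᵥ (Q *ᵥ Fin.snoc φ 1)
      = star φ ⬝ᵥ (M₀ *ᵥ φ)
        + (σ2 : ℂ) * (star (φ - 1) ⬝ᵥ ((G.map Complex.ofReal) *ᵥ (φ - 1))) := by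
  have hQcc : ∀ (i k : Fin M), Q i.castSucc k.castSucc = M₀ i k + σ2 * (G i k : ℂ) := by
    intro i k; simp [hQ]
  have hQcl : ∀ i : Fin M, Q i.castSucc (Fin.last M) = -(σ2:ℂ) * ∑ l, (G i l : ℂ) := by
    intro i; simp [hQ]
  have hQlc : ∀ k : Fin M, Q (Fin.last M) k.castSucc = -(σ2:ℂ) * ∑ l, (G l k : ℂ) := by
    intro k; simp [hQ]
  have hQll : Q (Fin.last M) (Fin.last M) = (σ2:ℂ) * ∑ p, ∑ q, (G p q : ℂ) := by
    simp [hQ]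
  have expand : star (Fin.snoc φ (1:ℂ)) ⬝ᵥ (Q *ᵥ Fin.snoc φ 1)
      = (∑ i : Fin M, (starRingEnd ℂ) (φ i) *
          ((∑ k : Fin M, Q i.castSucc k.castSucc * φ k) + Q i.castSucc (Fin.last M)))
        + ((∑ k : Fin M, Q (Fin.last M) k.castSucc * φ k) + Q (Fin.last M) (Fin.last M)) := by
    simp [dotProduct, mulVec, Fin.sum_univ_castSucc, Finset.mul_sum, mul_add]
  rw [expand, hQll]
  simp only [hQcc, hQcl, hQlc]
  have rhs1 : star φ ⬝ᵥ (M₀ *ᵥ φ) = ∑ i, ∑ k, (starRingEnd ℂ) (φ i) * (M₀ i k * φ k) := by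
    simp [dotProduct, mulVec, Finset.mul_sum]
  have rhs2 : star (φ - 1) ⬝ᵥ ((G.map Complex.ofReal) *ᵥ (φ - 1))
      = ∑ i, ∑ k, ((starRingEnd ℂ) (φ i) - 1) * ((G i k : ℂ) * (φ k - 1)) := by
    simp [dotProduct, mulVec, Finset.mul_sum, Matrix.map_apply, map_sub]
  rw [rhs1, rhs2]
  have e1 : ∀ i : Fin M, (starRingEnd ℂ) (φ i) *
        ((∑ k : Fin M, (M₀ i k + (σ2:ℂ) * (G i k : ℂ)) * φ k) + -(σ2:ℂ) * ∑ l, (G i l : ℂ))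
      = ∑ k : Fin M, ((starRingEnd ℂ) (φ i) * (M₀ i k * φ k)
          + (σ2:ℂ) * ((starRingEnd ℂ) (φ i) * (G i k : ℂ) * φ k)
          + -(σ2:ℂ) * ((starRingEnd ℂ) (φ i) * (G i k : ℂ))) := by
    intro i
    simp only [mul_add, Finset.mul_sum, ← Finset.sum_add_distrib]
    exact Finset.sum_congr rfl fun k _ => by ring
  have e2 : (∑ k : Fin M, -(σ2:ℂ) * (∑ l, (G l k : ℂ)) * φ k)
      = ∑ i : Fin M, ∑ k : Fin M, -(σ2:ℂ) * ((G i k : ℂ) * φ k) := by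
    rw [Finset.sum_comm]
    exact Finset.sum_congr rfl fun k _ => by
      simp only [Finset.sum_mul, Finset.mul_sum]
      exact Finset.sum_congr rfl fun l _ => by ring
  have e3 : (σ2:ℂ) * ∑ p, ∑ q, (G p q : ℂ) = ∑ i : Fin M, ∑ k : Fin M, (σ2:ℂ) * (G i k : ℂ) := by
    simp [Finset.mul_sum]
  rw [e2, e3]
  simp only [e1, Finset.mul_sum, ← Finset.sum_add_distrib]
  refine Finset.sum_congr rfl fun i _ => Finset.sum_congr rfl fun k _ => by ring

/-- The quadratic form is invariant under scaling by a unit-modulus scalar. -/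
lemma aux_quad_smul (M : ℕ) (Q : Matrix (Fin (M+1)) (Fin (M+1)) ℂ) (c : ℂ) (hc : ‖c‖ = 1)
    (u : Fin (M+1) → ℂ) :
    star (c • u) ⬝ᵥ (Q *ᵥ (c • u)) = star u ⬝ᵥ (Q *ᵥ u) := by
  have h1 : star c * c = 1 := by
    have : Complex.normSq c = 1 := by
      rw [Complex.normSq_eq_norm_sq, hc]; norm_num
    rw [RCLike.star_def, mul_comm, Complex.mul_conj, this, Complex.ofReal_one]
  rw [Matrix.mulVec_smul, star_smul, smul_dotProduct, dotProduct_smul, smul_smul, h1, one_smul]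

/-- If `û` solves the homogenized `(M+1)`-dimensional program (13), i.e. minimizes
`uᴴ Q u` over unit-modulus vectors, then `φ̂ = û_{1:M} / û_{M+1}` is unit-modulus and
minimizes the MAP objective `J(φ) = (1/σ²) φᴴ M₀ φ + (φ − 1)ᴴ G (φ − 1)` of eq. (12)
over unit-modulus vectors `φ`. -/
theorem homogenized_minimizer_gives_MAP (M : ℕ)
    (M₀ : Matrix (Fin M) (Fin M) ℂ) (hM₀ : M₀.IsHermitian)
    (G : Matrix (Fin M) (Fin M) ℝ) (hG : G.IsSymm)
    (σ2 : ℝ) (hσ2 : 0 < σ2)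
    (Q : Matrix (Fin (M + 1)) (Fin (M + 1)) ℂ)
    (hQ : ∀ i k : Fin (M + 1), Q i k =
      if hi : (i : ℕ) < M then
        if hk : (k : ℕ) < M then
          M₀ ⟨i, hi⟩ ⟨k, hk⟩ + (σ2 : ℂ) * (G ⟨i, hi⟩ ⟨k, hk⟩ : ℂ)
        else -(σ2 : ℂ) * ∑ l, (G ⟨i, hi⟩ l : ℂ)
      else
        if hk : (k : ℕ) < M then -(σ2 : ℂ) * ∑ l, (G l ⟨k, hk⟩ : ℂ)
        else (σ2 : ℂ) * ∑ p, ∑ q, (G p q : ℂ))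
    (uhat : Fin (M + 1) → ℂ) (huhat : ∀ i, ‖uhat i‖ = 1)
    (hmin : ∀ u : Fin (M + 1) → ℂ, (∀ i, ‖u i‖ = 1) →
      (star uhat ⬝ᵥ (Q *ᵥ uhat)).re ≤ (star u ⬝ᵥ (Q *ᵥ u)).re)
    (φhat : Fin M → ℂ)
    (hφhat : ∀ i : Fin M, φhat i = (uhat (Fin.last M))⁻¹ * uhat i.castSucc) :
    (∀ i, ‖φhat i‖ = 1) ∧
      ∀ φ : Fin M → ℂ, (∀ i, ‖φ i‖ = 1) →
        (1 / σ2) * (star φhat ⬝ᵥ (M₀ *ᵥ φhat)).re +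
            (star (φhat - 1) ⬝ᵥ ((G.map Complex.ofReal) *ᵥ (φhat - 1))).re ≤
          (1 / σ2) * (star φ ⬝ᵥ (M₀ *ᵥ φ)).re +
            (star (φ - 1) ⬝ᵥ ((G.map Complex.ofReal) *ᵥ (φ - 1))).re := by
  have quad_snoc := aux_quad_snoc M M₀ G σ2 Q hQ
  set c := uhat (Fin.last M) with hc
  have hcn : ‖c‖ = 1 := huhat _
  have hc0 : c ≠ 0 := by intro h; rw [h, norm_zero] at hcn; norm_num at hcn
  have hunit : ∀ i, ‖φhat i‖ = 1 := by
    intro i; rw [hφhat i, norm_mul, norm_inv, hcn, huhat]; norm_num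
  refine ⟨hunit, fun φ hφ => ?_⟩
  have hrep : uhat = c • (Fin.snoc φhat 1 : Fin (M+1) → ℂ) := by
    funext i
    refine Fin.lastCases ?_ (fun j => ?_) i
    · simp [Pi.smul_apply]; rfl
    · simp only [Pi.smul_apply, Fin.snoc_castSucc, smul_eq_mul, hφhat j, ← mul_assoc,
        mul_inv_cancel₀ hc0, one_mul]
  have hsnorm : ∀ i, ‖(Fin.snoc φ (1:ℂ) : Fin (M+1) → ℂ) i‖ = 1 := by
    intro i
    refine Fin.lastCases ?_ (fun j => ?_) i <;> simp [hφ]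
  have key := hmin (Fin.snoc φ 1) hsnorm
  rw [hrep, aux_quad_smul M Q c hcn, quad_snoc φhat, quad_snoc φ] at key
  simp only [Complex.add_re, Complex.re_ofReal_mul] at key
  have hσ2' : σ2 ≠ 0 := ne_of_gt hσ2
  have e : ∀ A B : ℝ, (1/σ2) * A + B = (1/σ2) * (A + σ2 * B) := by
    intro A B; field_simp
  rw [e, e]
  exact mul_le_mul_of_nonneg_left key (by positivity)
end
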